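/- arXiv:1910.09258 — 6 statements merged into one kernel-verified Lean document; each statement's English description precedes it below -/
import Mathlib

section
/- Every finite partial combinatory algebra has exactly one element. -/
/-- Partial application lifted to `Option` (strict: defined iff both sides defined). -/
def pap {A : Type*} (f : A → A → Option A) (x y : Option A) : Option A :=
  x.bind fun a => y.bind fun b => f a b

/-- A partial combinatory algebra, via Feferman's characterization with combinators `k`, `s`. -/
structure PCA (A : Type*) where
  app : A → A → Option A
  k : A
  s : A
  k_spec : ∀ a b : A, pap app (pap app (some k) (some a)) (some b) = some a
  s_defined : ∀ a b : A, (pap app (pap app (some s) (some a)) (some b)).isSome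
  s_spec : ∀ a b c : A,
    pap app (pap app (pap app (some s) (some a)) (some b)) (some c)
      = pap app (pap app (some a) (some c)) (pap app (some b) (some c))

namespace PCA
variable {A : Type*}

/-- Application on (possibly undefined) terms. -/
def ap (P : PCA A) (x y : Option A) : Option A := pap P.app x y

def K' (P : PCA A) : Option A := some P.k
def S' (P : PCA A) : Option A := some P.s
/-- The identity combinator `i = s·k·k`. -/
def i (P : PCA A) : Option A := P.ap (P.ap P.S' P.K') P.K'
/-- `true = k`. -/
def tru (P : PCA A) : Option A := P.K'
/-- `false = k·i`. -/
def fls (P : PCA A) : Option A := P.ap P.K' P.i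
/-- Pairing `⟨a,b⟩ = λ*z. z·a·b`, implemented as `s·(s·i·(k·a))·(k·b)`. -/
def pair (P : PCA A) (x y : Option A) : Option A :=
  P.ap (P.ap P.S' (P.ap (P.ap P.S' P.i) (P.ap P.K' x))) (P.ap P.K' y)
/-- Numerals: `0̄ = i`, `(n+1)‾ = ⟨false, n̄⟩`. -/
def numeral (P : PCA A) : ℕ → Option A
  | 0 => P.i
  | n + 1 => P.pair P.fls (P.numeral n)
/-- An element is total if it is defined on every argument. -/
def total (P : PCA A) (f : A) : Prop := ∀ a : A, (P.app f a).isSome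

end PCA


namespace PCAProof
open PCA
variable {A : Type*} (P : PCA A)

lemma pap_some {f : A → A → Option A} {x y : Option A} {c : A}
    (h : pap f x y = some c) : ∃ a b, x = some a ∧ y = some b := by
  cases x with
  | none => simp [pap] at h
  | some a =>
    cases y with
    | none => simp [pap] at h
    | some b => exact ⟨a, b, rfl, rfl⟩

lemma k_total (a : A) : ∃ x, P.ap P.K' (some a) = some x := by
  obtain ⟨u, v, hu, _⟩ := pap_some (P.k_spec a a)
  exact ⟨u, hu⟩

lemma i_some : ∃ x, P.i = some x := by
  obtain ⟨c, hc⟩ := Option.isSome_iff_exists.mp (P.s_defined P.k P.k)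
  exact ⟨c, hc⟩

lemma ap_i (a : A) : P.ap P.i (some a) = some a := by
  obtain ⟨ka, hka⟩ := k_total P a
  have h := P.s_spec P.k P.k a
  show pap P.app P.i (some a) = some a
  unfold PCA.i PCA.ap PCA.S' PCA.K'
  rw [h]
  have hka' : pap P.app (some P.k) (some a) = some ka := hka
  nth_rewrite 2 [hka']
  exact P.k_spec a ka

lemma fls_some : ∃ x, P.fls = some x := by
  obtain ⟨ie, hie⟩ := i_some P
  obtain ⟨x, hx⟩ := k_total P ie
  exact ⟨x, by rw [PCA.fls, hie]; exact hx⟩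

lemma s_partial (a b : A) : ∃ x, P.ap (P.ap P.S' (some a)) (some b) = some x :=
  Option.isSome_iff_exists.mp (P.s_defined a b)

lemma pair_some {a b : A} : ∃ x, P.pair (some a) (some b) = some x := by
  obtain ⟨ie, hie⟩ := i_some P
  obtain ⟨ka, hka⟩ := k_total P a
  obtain ⟨kb, hkb⟩ := k_total P b
  obtain ⟨w, hw⟩ := s_partial P ie ka
  obtain ⟨z, hz⟩ := s_partial P w kb
  refine ⟨z, ?_⟩
  rw [PCA.pair, hie, hka, hw, hkb]
  exact hz

lemma pair_ap (a b c : A) :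
    P.ap (P.pair (some a) (some b)) (some c)
      = P.ap (P.ap (some c) (some a)) (some b) := by
  obtain ⟨ie, hie⟩ := i_some P
  obtain ⟨ka, hka⟩ := k_total P a
  obtain ⟨kb, hkb⟩ := k_total P b
  obtain ⟨w, hw⟩ := s_partial P ie ka
  have hp : P.pair (some a) (some b) = P.ap (P.ap P.S' (some w)) (some kb) := by
    rw [PCA.pair, hie, hka, hw, hkb]
  rw [hp]
  have h1 : P.ap (P.ap (P.ap P.S' (some w)) (some kb)) (some c)
      = P.ap (P.ap (some w) (some c)) (P.ap (some kb) (some c)) := P.s_spec w kb c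
  rw [h1]
  have hwc : P.ap (some w) (some c) = P.ap (some c) (some a) := by
    have h2 : P.ap (P.ap (P.ap P.S' (some ie)) (some ka)) (some c)
        = P.ap (P.ap (some ie) (some c)) (P.ap (some ka) (some c)) := P.s_spec ie ka c
    have : P.ap (some w) (some c) = P.ap (P.ap (some ie) (some c)) (P.ap (some ka) (some c)) := by
      rw [← h2, hw]
    rw [this]
    have hic : P.ap (some ie) (some c) = some c := by
      have := ap_i P c; rwa [hie] at this
    have hkac : P.ap (some ka) (some c) = some a := by
      have := P.k_spec a c
      show pap P.app (some ka) (some c) = some a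
      rw [show (some ka : Option A) = pap P.app (some P.k) (some a) from hka.symm]
      exact this
    rw [hic, hkac]
  have hkbc : P.ap (some kb) (some c) = some b := by
    have := P.k_spec b c
    show pap P.app (some kb) (some c) = some b
    rw [show (some kb : Option A) = pap P.app (some P.k) (some b) from hkb.symm]
    exact this
  rw [hwc, hkbc]

lemma pair_tru (a b : A) : P.ap (P.pair (some a) (some b)) P.tru = some a := by
  show P.ap (P.pair (some a) (some b)) (some P.k) = some a
  rw [pair_ap]
  exact P.k_spec a b

lemma pair_fls (a b : A) : P.ap (P.pair (some a) (some b)) P.fls = some b := by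
  obtain ⟨ie, hie⟩ := i_some P
  obtain ⟨fe, hfe⟩ := fls_some P
  rw [hfe, pair_ap]
  have hfa : P.ap (some fe) (some a) = some ie := by
    have := P.k_spec ie a
    show pap P.app (some fe) (some a) = some ie
    have hfe' : (some fe : Option A) = pap P.app (some P.k) (some ie) := by
      rw [← hfe, PCA.fls, hie]; rfl
    rw [hfe']
    exact this
  rw [hfa]
  have := ap_i P b; rwa [hie] at this

lemma numeral_some (n : ℕ) : ∃ x, P.numeral n = some x := by
  induction n with
  | zero => exact i_some P
  | succ n ih =>
    obtain ⟨x, hx⟩ := ih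
    obtain ⟨fe, hfe⟩ := fls_some P
    rw [PCA.numeral, hfe, hx]
    exact pair_some P

lemma trivial_of_tru_eq_fls (h : P.tru = P.fls) : ∀ a b : A, a = b := by
  intro a b
  obtain ⟨ie, hie⟩ := i_some P
  have h1 : P.ap (P.ap P.tru (some a)) (some b) = some a := P.k_spec a b
  have h2 : P.ap (P.ap P.fls (some a)) (some b) = some b := by
    have hfls : P.fls = P.ap P.K' (some ie) := by rw [PCA.fls, hie]
    rw [hfls]
    have h3 : P.ap (P.ap (P.ap P.K' (some ie)) (some a)) (some b)
        = P.ap (some ie) (some b) := by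
      have : P.ap (P.ap P.K' (some ie)) (some a) = some ie := P.k_spec ie a
      rw [this]
    rw [h3]
    have := ap_i P b; rwa [hie] at this
  rw [h] at h1
  rw [h1] at h2
  exact Option.some_injective A h2

lemma numeral_tru (n : ℕ) :
    P.ap (P.numeral (n+1)) P.tru = P.fls := by
  obtain ⟨x, hx⟩ := numeral_some P n
  obtain ⟨fe, hfe⟩ := fls_some P
  rw [PCA.numeral, hfe, hx, pair_tru, ← hfe]

lemma numeral_fls (n : ℕ) :
    P.ap (P.numeral (n+1)) P.fls = P.numeral n := by
  obtain ⟨x, hx⟩ := numeral_some P n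
  obtain ⟨fe, hfe⟩ := fls_some P
  have h2 := pair_fls P fe x
  rw [hfe] at h2
  rw [PCA.numeral, hx, hfe, h2]

lemma numeral_inj (hne : P.tru ≠ P.fls) : ∀ n m : ℕ, P.numeral n = P.numeral m → n = m := by
  intro n
  induction n with
  | zero =>
    intro m h
    cases m with
    | zero => rfl
    | succ m =>
      exfalso
      apply hne
      have h1 : P.ap (P.numeral 0) P.tru = P.tru := by
        show P.ap P.i P.tru = P.tru
        exact ap_i P P.k
      rw [← h1, h, numeral_tru]
  | succ n ih =>
    intro m h
    cases m with
    | zero =>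
      exfalso
      apply hne
      have h1 : P.ap (P.numeral 0) P.tru = P.tru := by
        show P.ap P.i P.tru = P.tru
        exact ap_i P P.k
      rw [← h1, ← h, numeral_tru]
    | succ m =>
      have h2 : P.numeral n = P.numeral m := by
        rw [← numeral_fls P n, ← numeral_fls P m, h]
      rw [ih m h2]

end PCAProof

/-- Every finite partial combinatory algebra has exactly one element. -/
theorem finite_pca_has_exactly_one_element {A : Type*} [Finite A] (P : PCA A) :
    ∃ a : A, ∀ b : A, b = a := by
  by_contra hcon
  push_neg at hcon
  obtain ⟨b, hb⟩ := hcon P.k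
  have hne : P.tru ≠ P.fls := fun h => hb (PCAProof.trivial_of_tru_eq_fls P h b P.k)
  have hinj : Function.Injective (fun n => P.numeral n) := by
    intro n m h
    exact PCAProof.numeral_inj P hne n m h
  haveI : Finite (Option A) := Finite.of_equiv _ (Equiv.optionEquivSumPUnit.{0} A).symm
  obtain ⟨n, m, hnm, h⟩ := Finite.exists_ne_map_eq_of_infinite (fun n => P.numeral n)
  exact hnm (hinj h)
end

section
/- Post's theorem fails in Kleene's second model K₂: the set A = {0̄} (the all-zero sequence) and its complement are both c.e. in K₂, but A is not decidable in K₂: there is no continuous total functional γ on ω^ω taking one constant value t on 0̄ and a different constant value f on all other sequences. -/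
/-- Post's theorem fails in Kleene's second model: `{0̄}` and its complement are
both domains of partial continuous functionals on Baire space, but no total
continuous functional decides `{0̄}` with two distinct constant values. -/
theorem post_theorem_fails_in_K2 :
    (∃ F : (ℕ → ℕ) → Part (ℕ → ℕ),
      (∀ x : ℕ → ℕ, (F x).Dom ↔ x = fun _ => 0) ∧
      Continuous fun y : {x : ℕ → ℕ // (F x).Dom} => (F y.1).get y.2) ∧
    (∃ G : (ℕ → ℕ) → Part (ℕ → ℕ),
      (∀ x : ℕ → ℕ, (G x).Dom ↔ x ≠ fun _ => 0) ∧
      Continuous fun y : {x : ℕ → ℕ // (G x).Dom} => (G y.1).get y.2) ∧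
    ∀ (γ : (ℕ → ℕ) → ℕ → ℕ) (t f : ℕ → ℕ), Continuous γ → t ≠ f →
      ¬ ((γ (fun _ => 0) = t) ∧ ∀ x : ℕ → ℕ, x ≠ (fun _ => 0) → γ x = f) := by
  refine ⟨⟨fun x => Part.assert (x = fun _ => 0) (fun _ => Part.some (fun _ => 0)),
      fun x => ?_, ?_⟩,
    ⟨fun x => Part.assert (x ≠ fun _ => 0) (fun _ => Part.some (fun _ => 0)),
      fun x => ?_, ?_⟩, ?_⟩
  · simp [Part.assert]
  · exact continuous_const
  · simp [Part.assert]
  · exact continuous_const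
  · intro γ t f hγ htf ⟨h0, hf⟩
    set x : ℕ → (ℕ → ℕ) := fun n k => if k < n then 0 else 1 with hx
    have hxne : ∀ n, x n ≠ fun _ => 0 := by
      intro n h
      have := congrFun h n
      simp [hx] at this
    have hlim : Filter.Tendsto x Filter.atTop (nhds (fun _ => 0)) := by
      rw [tendsto_pi_nhds]
      intro k
      refine Filter.Tendsto.congr' ?_ tendsto_const_nhds
      filter_upwards [Filter.eventually_ge_atTop (k + 1)] with n hn
      simp [hx, Nat.lt_of_succ_le hn]
    have h1 : Filter.Tendsto (γ ∘ x) Filter.atTop (nhds t) := by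
      rw [← h0]
      exact (hγ.tendsto _).comp hlim
    have h2 : Filter.Tendsto (γ ∘ x) Filter.atTop (nhds f) := by
      have : (γ ∘ x) = fun _ => f := funext fun n => hf _ (hxne n)
      rw [this]
      exact tendsto_const_nhds
    exact htf (tendsto_nhds_unique h1 h2)
end

section
/- In every nontotal pca, the halting set H = {⟨a,b⟩ : a·b↓} is computably enumerable but not decidable. -/
/-- The halting set `H = {⟨a,b⟩ : a·b↓}` of a pca. -/
def PCA.Hset {A : Type*} (P : PCA A) : Set A :=
  {x : A | ∃ a b : A, P.pair (some a) (some b) = some x ∧ (P.app a b).isSome}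

namespace PCA
variable {A : Type*} (P : PCA A)

lemma ap_none_left (y : Option A) : P.ap none y = none := rfl

lemma ap_none_right (x : Option A) : P.ap x none = none := by
  cases x <;> rfl

lemma ap_some (a b : A) : P.ap (some a) (some b) = P.app a b := rfl

lemma k_red (a : A) {y : Option A} (hy : y.isSome) :
    P.ap (P.ap P.K' (some a)) y = some a := by
  obtain ⟨b, rfl⟩ := Option.isSome_iff_exists.mp hy
  exact P.k_spec a b

lemma ka_isSome (a : A) : (P.ap P.K' (some a)).isSome := by
  rcases hx : P.ap P.K' (some a) with _ | c
  · have h := P.k_spec a a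
    have hx' : pap P.app (some P.k) (some a) = none := hx
    rw [hx'] at h
    simp [pap] at h
  · simp

lemma s2_isSome (a b : A) : (P.ap (P.ap P.S' (some a)) (some b)).isSome :=
  P.s_defined a b

lemma s_red (a b : A) (z : Option A) :
    P.ap (P.ap (P.ap P.S' (some a)) (some b)) z
      = P.ap (P.ap (some a) z) (P.ap (some b) z) := by
  cases z with
  | none => rw [P.ap_none_right, P.ap_none_right, P.ap_none_right, P.ap_none_left]
  | some c => exact P.s_spec a b c

lemma i_isSome : P.i.isSome := P.s_defined P.k P.k

lemma i_red (c : A) : P.ap P.i (some c) = some c := by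
  have h : P.i = P.ap (P.ap P.S' (some P.k)) (some P.k) := rfl
  rw [h, P.s_red]
  show P.ap (P.ap P.K' (some c)) (P.ap P.K' (some c)) = some c
  rw [P.k_red c (P.ka_isSome c)]

lemma fls_isSome : P.fls.isSome := by
  obtain ⟨ie, hie⟩ := Option.isSome_iff_exists.mp P.i_isSome
  have : P.fls = P.ap P.K' (some ie) := by rw [fls, hie]
  rw [this]; exact P.ka_isSome ie

lemma pair_isSome (a b : A) : (P.pair (some a) (some b)).isSome := by
  obtain ⟨ie, hie⟩ := Option.isSome_iff_exists.mp P.i_isSome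
  obtain ⟨ae, hae⟩ := Option.isSome_iff_exists.mp (P.ka_isSome a)
  obtain ⟨be, hbe⟩ := Option.isSome_iff_exists.mp (P.ka_isSome b)
  have hx : (P.ap (P.ap P.S' P.i) (P.ap P.K' (some a))).isSome := by
    rw [hie, hae]; exact P.s2_isSome ie ae
  obtain ⟨xe, hxe⟩ := Option.isSome_iff_exists.mp hx
  have : P.pair (some a) (some b)
      = P.ap (P.ap P.S' (some xe)) (some be) := by rw [pair, hxe, hbe]
  rw [this]; exact P.s2_isSome xe be

lemma pair_red (a b c : A) :
    P.ap (P.pair (some a) (some b)) (some c)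
      = P.ap (P.ap (some c) (some a)) (some b) := by
  obtain ⟨ie, hie⟩ := Option.isSome_iff_exists.mp P.i_isSome
  obtain ⟨ae, hae⟩ := Option.isSome_iff_exists.mp (P.ka_isSome a)
  obtain ⟨be, hbe⟩ := Option.isSome_iff_exists.mp (P.ka_isSome b)
  have hx : (P.ap (P.ap P.S' P.i) (P.ap P.K' (some a))).isSome := by
    rw [hie, hae]; exact P.s2_isSome ie ae
  obtain ⟨xe, hxe⟩ := Option.isSome_iff_exists.mp hx
  have hpair : P.pair (some a) (some b)
      = P.ap (P.ap P.S' (some xe)) (some be) := by rw [pair, hxe, hbe]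
  rw [hpair, P.s_red]
  have h1 : P.ap (some xe) (some c) = P.ap (some c) (some a) := by
    rw [← hxe, hie, hae, P.s_red]
    rw [← hie, P.i_red, ← hae, P.k_red a (by simp)]
  have h2 : P.ap (some be) (some c) = some b := by
    rw [← hbe, P.k_red b (by simp)]
  rw [h1, h2]

lemma pair_tru (a b : A) :
    P.ap (P.pair (some a) (some b)) P.tru = some a := by
  have : P.tru = some P.k := rfl
  rw [this, P.pair_red]
  exact P.k_red a (by simp)

lemma pair_fls (a b : A) :
    P.ap (P.pair (some a) (some b)) P.fls = some b := by
  obtain ⟨fe, hfe⟩ := Option.isSome_iff_exists.mp P.fls_isSome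
  obtain ⟨ie, hie⟩ := Option.isSome_iff_exists.mp P.i_isSome
  rw [hfe, P.pair_red]
  have h1 : P.ap (some fe) (some a) = some ie := by
    rw [← hfe]
    have : P.fls = P.ap P.K' (some ie) := by rw [fls, hie]
    rw [this, P.k_red ie (by simp)]
  rw [h1, ← hie, P.i_red]

end PCA

/-- Terms over a pca with one variable, for bracket abstraction. -/
inductive PTerm (A : Type*) where
  | var : PTerm A
  | const : A → PTerm A
  | app : PTerm A → PTerm A → PTerm A

namespace PCA
variable {A : Type*} (P : PCA A)

def teval (P : PCA A) : PTerm A → A → Option A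
  | .var, x => some x
  | .const a, _ => some a
  | .app t u, x => P.ap (P.teval t x) (P.teval u x)

def tabs (P : PCA A) : PTerm A → Option A
  | .var => P.i
  | .const a => P.ap P.K' (some a)
  | .app t u => P.ap (P.ap P.S' (P.tabs t)) (P.tabs u)

lemma tabs_isSome (t : PTerm A) : (P.tabs t).isSome := by
  induction t with
  | var => exact P.i_isSome
  | const a => exact P.ka_isSome a
  | app t u iht ihu =>
      obtain ⟨te, hte⟩ := Option.isSome_iff_exists.mp iht
      obtain ⟨ue, hue⟩ := Option.isSome_iff_exists.mp ihu
      show (P.ap (P.ap P.S' (P.tabs t)) (P.tabs u)).isSome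
      rw [hte, hue]; exact P.s2_isSome te ue

lemma tabs_red (t : PTerm A) (x : A) :
    P.ap (P.tabs t) (some x) = P.teval t x := by
  induction t with
  | var => exact P.i_red x
  | const a => exact P.k_red a (by simp)
  | app t u iht ihu =>
      obtain ⟨te, hte⟩ := Option.isSome_iff_exists.mp (P.tabs_isSome t)
      obtain ⟨ue, hue⟩ := Option.isSome_iff_exists.mp (P.tabs_isSome u)
      show P.ap (P.ap (P.ap P.S' (P.tabs t)) (P.tabs u)) (some x) = _
      rw [hte, hue, P.s_red, ← hte, ← hue, iht, ihu]
      rfl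

end PCA

/-- In every nontotal pca, the halting set is c.e. but not decidable. -/
theorem halting_set_ce_not_decidable {A : Type*} (P : PCA A)
    (hnt : ∃ f g : A, P.app f g = none) :
    (∃ e : A, ∀ a b p : A, P.pair (some a) (some b) = some p →
        ((P.app e p).isSome ↔ (P.app a b).isSome)) ∧
    ¬ ∃ f : A, P.total f ∧ ∀ p : A,
        (p ∈ P.Hset → P.app f p = P.tru) ∧ (p ∉ P.Hset → P.app f p = P.fls) := by
  classical
  obtain ⟨fe, hfe⟩ := Option.isSome_iff_exists.mp P.fls_isSome
  obtain ⟨ie, hie⟩ := Option.isSome_iff_exists.mp P.i_isSome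
  constructor
  · -- c.e. part
    set Te : PTerm A := .app (.app .var (.const P.k)) (.app .var (.const fe)) with hTe
    obtain ⟨ee, hee⟩ := Option.isSome_iff_exists.mp (P.tabs_isSome Te)
    refine ⟨ee, fun a b p hp => ?_⟩
    have h1 : P.app ee p = P.teval Te p := by
      rw [← P.ap_some, ← hee, P.tabs_red]
    have h2 : P.teval Te p
        = P.ap (P.ap (some p) (some P.k)) (P.ap (some p) (some fe)) := rfl
    have htru : (some P.k : Option A) = P.tru := rfl
    have h3 : P.ap (some p) (some P.k) = some a := by
      rw [htru, ← hp, P.pair_tru]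
    have h4 : P.ap (some p) (some fe) = some b := by
      rw [← hfe, ← hp, P.pair_fls]
    rw [h1, h2, h3, h4, P.ap_some]
  · -- undecidability
    rintro ⟨f, hftot, hf⟩
    obtain ⟨u, v, huv⟩ := hnt
    -- the "always undefined" combinator m = s·(k·u)·(k·v)
    obtain ⟨ue, hue⟩ := Option.isSome_iff_exists.mp (P.ka_isSome u)
    obtain ⟨ve, hve⟩ := Option.isSome_iff_exists.mp (P.ka_isSome v)
    obtain ⟨me, hme⟩ := Option.isSome_iff_exists.mp (P.s2_isSome ue ve)
    have hm_red : ∀ z : A, P.ap (some me) (some z) = none := by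
      intro z
      rw [← hme, P.s_red, ← hue, ← hve, P.k_red u (by simp), P.k_red v (by simp),
        P.ap_some, huv]
    -- the "always defined" combinator n = k·i
    obtain ⟨ne, hne⟩ := Option.isSome_iff_exists.mp (P.ka_isSome ie)
    have hn_red : ∀ z : A, P.ap (some ne) (some z) = some ie := by
      intro z
      rw [← hne, P.k_red ie (by simp)]
    -- diagonal term
    set kx : PTerm A := .app (.const P.k) .var with hkx
    set pairT : PTerm A :=
      .app (.app (.const P.s) (.app (.app (.const P.s) (.const ie)) kx)) kx with hpairT
    have hpairT_eval : ∀ x : A, P.teval pairT x = P.pair (some x) (some x) := by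
      intro x
      show P.ap (P.ap (some P.s)
          (P.ap (P.ap (some P.s) (some ie)) (P.ap (some P.k) (some x))))
          (P.ap (some P.k) (some x)) = _
      rw [PCA.pair, hie]
      rfl
    set Tg : PTerm A :=
      .app (.app (.app (.app (.const f) pairT) (.const me)) (.const ne)) (.const ie)
      with hTg
    obtain ⟨ge, hge⟩ := Option.isSome_iff_exists.mp (P.tabs_isSome Tg)
    obtain ⟨p, hp⟩ := Option.isSome_iff_exists.mp (P.pair_isSome ge ge)
    have hstep := P.tabs_red Tg ge
    rw [hge] at hstep
    have hchain : P.app ge ge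
        = P.ap (P.ap (P.ap (P.app f p) (some me)) (some ne)) (some ie) := by
      rw [← P.ap_some, hstep]
      show P.ap (P.ap (P.ap (P.ap (some f) (P.teval pairT ge)) (some me)) (some ne))
          (some ie) = _
      rw [hpairT_eval, hp, P.ap_some]
    -- membership of p in H is equivalent to g·g being defined
    have hmem : p ∈ P.Hset ↔ (P.app ge ge).isSome := by
      constructor
      · rintro ⟨a, b, hab, habS⟩
        have ha : a = ge := by
          have h1 := P.pair_tru a b
          have h2 := P.pair_tru ge ge
          rw [hab] at h1; rw [hp] at h2
          exact Option.some_injective A (h1.symm.trans h2)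
        have hb : b = ge := by
          have h1 := P.pair_fls a b
          have h2 := P.pair_fls ge ge
          rw [hab] at h1; rw [hp] at h2
          exact Option.some_injective A (h1.symm.trans h2)
        rwa [ha, hb] at habS
      · intro h
        exact ⟨ge, ge, hp, h⟩
    by_cases hgg : (P.app ge ge).isSome
    · -- then f·p = tru = k, so g·g = m·i = u·v = none
      have hfp : P.app f p = P.tru := (hf p).1 (hmem.mpr hgg)
      have : P.app ge ge = none := by
        rw [hchain, hfp]
        show P.ap (P.ap (P.ap P.K' (some me)) (some ne)) (some ie) = none
        rw [P.k_red me (by simp), hm_red]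
      rw [this] at hgg
      simp at hgg
    · -- then f·p = fls, so g·g = n·i = i, defined
      have hfp : P.app f p = P.fls := (hf p).2 (fun h => hgg (hmem.mp h))
      have : P.app ge ge = some ie := by
        rw [hchain, hfp, hfe]
        have h1 : P.ap (some fe) (some me) = some ie := by
          rw [← hfe]
          show P.ap (P.ap P.K' P.i) (some me) = some ie
          rw [hie, P.k_red ie (by simp)]
        have h2 : P.ap (some ie) (some ne) = some ne := by
          rw [← hie, P.i_red]
        rw [h1, h2, hn_red]
      rw [this] at hgg
      simp at hgg
end

section
/- There is no 1-1 computable numbering (ψ_x) of all unary partial computable functions such that ω with the application n·m = ψ_n(m) is a pca. Equivalently, there is no extensional pca structure on the set of unary p.c. functions with the natural application. -/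
/-- There is no 1-1 computable numbering of all unary p.c. functions such that
`ω` with application `n·m = ψ_n(m)` is a pca (i.e. has Feferman combinators
`k` and `s`). -/
theorem no_extensional_pca_on_pc_functions :
    ¬ ∃ ψ : ℕ → ℕ →. ℕ,
      Partrec₂ ψ ∧
      (∀ f : ℕ →. ℕ, Partrec f → ∃ x : ℕ, ψ x = f) ∧
      Function.Injective ψ ∧
      ∃ k s : ℕ,
        (∀ a b : ℕ, ((ψ k a).bind fun f => ψ f b) = Part.some a) ∧
        (∀ a b : ℕ, ((ψ s a).bind fun f => ψ f b).Dom) ∧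
        (∀ a b c : ℕ,
          (((ψ s a).bind fun f => ψ f b).bind fun f => ψ f c)
            = (ψ a c).bind fun f => (ψ b c).bind fun g => ψ f g) := by
  rintro ⟨ψ, hψ, hsurj, hinj, k, s, hk, hsdom, hs⟩
  -- the K combinator values
  have hkdom : ∀ a, (ψ k a).Dom := by
    intro a
    have := hk a 0
    have : ((ψ k a).bind fun f => ψ f 0).Dom := by rw [this]; trivial
    exact this.of_bind
  set K : ℕ → ℕ := fun a => (ψ k a).get (hkdom a) with hK
  have hkeq : ∀ a, ψ k a = Part.some (K a) := fun a => (Part.some_get (hkdom a)).symm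
  have hKval : ∀ a b, ψ (K a) b = Part.some a := by
    intro a b
    have := hk a b
    rwa [hkeq a, Part.bind_some] at this
  -- the S combinator values
  have hs1dom : ∀ a, (ψ s a).Dom := fun a => (hsdom a 0).of_bind
  set S1 : ℕ → ℕ := fun a => (ψ s a).get (hs1dom a) with hS1
  have hseq : ∀ a, ψ s a = Part.some (S1 a) := fun a => (Part.some_get (hs1dom a)).symm
  have hs2dom : ∀ a b, (ψ (S1 a) b).Dom := by
    intro a b
    have := hsdom a b
    rwa [hseq a, Part.bind_some] at this
  set S2 : ℕ → ℕ → ℕ := fun a b => (ψ (S1 a) b).get (hs2dom a b) with hS2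
  have hs2eq : ∀ a b, ψ (S1 a) b = Part.some (S2 a b) := fun a b => (Part.some_get (hs2dom a b)).symm
  have hSval : ∀ a b c, ψ (S2 a b) c = (ψ a c).bind fun f => (ψ b c).bind fun g => ψ f g := by
    intro a b c
    have := hs a b c
    rwa [hseq a, Part.bind_some, hs2eq a b, Part.bind_some] at this
  -- the reduction function
  set p : ℕ := K (K 0) with hp
  set f : ℕ → ℕ := fun a => S2 p (S2 (K a) (K a)) with hf
  have hfval : ∀ a c, ψ (f a) c = (ψ a a).bind fun _ => Part.some 0 := by
    intro a c
    rw [hf]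
    simp only [hSval, hKval, Part.bind_some, hp]
  -- the key equivalence
  have hiff : ∀ a, (ψ a a).Dom ↔ f a = K 0 := by
    intro a
    constructor
    · intro h
      apply hinj
      funext c
      rw [hfval a c, hKval 0 c, Part.Dom.bind h]
    · intro h
      have : (ψ (f a) 0).Dom := by rw [h, hKval]; trivial
      rw [hfval a 0] at this
      exact this.of_bind
  -- f is computable
  have hcf : Computable f := by
    have hH2 : Partrec fun x => (ψ s x).bind fun t => ψ t x :=
      (hψ.comp (Computable.const s) Computable.id).bind
        (hψ.comp Computable.snd Computable.fst)
    have hH : Partrec fun a => (ψ k a).bind fun ka => (ψ s ka).bind fun t => ψ t ka :=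
      (hψ.comp (Computable.const k) Computable.id).bind (hH2.comp Computable.snd)
    have hF : Partrec fun a =>
        ((ψ k a).bind fun ka => (ψ s ka).bind fun t => ψ t ka).bind fun q => ψ (S1 p) q :=
      hH.bind (hψ.comp (Computable.const (S1 p)) Computable.snd)
    apply hF.of_eq_tot
    intro a
    rw [hkeq a, Part.bind_some, hseq (K a), Part.bind_some, hs2eq (K a) (K a),
      Part.bind_some, hs2eq p]
    exact Part.mem_some _
  -- the diagonal function
  set g : ℕ →. ℕ := fun a => bif f a = K 0 then Part.none else Part.some 0 with hg
  have hgp : Partrec g := by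
    apply Partrec.cond
    · exact (Primrec.eq.decide.to_comp.comp hcf (Computable.const (K 0)))
    · exact Partrec.none
    · exact (Computable.const 0).partrec
  obtain ⟨e, he⟩ := hsurj g hgp
  by_cases h : (ψ e e).Dom
  · have h1 : f e = K 0 := (hiff e).mp h
    rw [he, hg] at h
    simp [h1] at h
  · have h1 : f e ≠ K 0 := fun hc => h ((hiff e).mpr hc)
    apply h
    rw [he, hg]
    simp [h1]
end

section
/- In every pca, the sets A = {a : a·a↓ = 0̄} and B = {a : a·a↓ = 1̄} are computably inseparable: there is no decidable set C with A ⊆ C ⊆ complement of B, provided 0̄ ≠ 1̄ (which holds when the pca is nontrivial). -/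
/-- In any pca with `0̄ ≠ 1̄`, the sets `{a : a·a↓ = 0̄}` and `{a : a·a↓ = 1̄}` are
computably inseparable: no decidable set contains the first and misses the second. -/
theorem diagonal_sets_computably_inseparable {A : Type*} (P : PCA A)
    (h01 : P.numeral 0 ≠ P.numeral 1) :
    ¬ ∃ C : Set A,
        (∃ c : A, P.total c ∧ ∀ a : A,
          (a ∈ C → P.app c a = P.numeral 1) ∧ (a ∉ C → P.app c a = P.numeral 0)) ∧
        {a : A | P.app a a = P.numeral 0} ⊆ C ∧
        C ⊆ {a : A | P.app a a = P.numeral 1}ᶜ := by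
  rintro ⟨C, ⟨c, -, hc⟩, hA, hB⟩
  by_cases h : c ∈ C
  · exact hB h ((hc c).1 h)
  · exact h (hA ((hc c).2 h))
end

section
/- In any total nontrivial pca (combinatory algebra), 0̄ and 1̄ are inseparable: there is no total 0̄-1̄-valued c ∈ 𝔸 with c·a = 0̄ ⟹ a ≠ 1̄ and c·a = 1̄ ⟹ a ≠ 0̄. -/
/-- `0̄` and `1̄` are separable in the pca `P`. -/
def PCA.Sep01 {A : Type*} (P : PCA A) : Prop :=
  ∃ c : A, P.total c ∧
    (∀ a : A, P.app c a = P.numeral 0 ∨ P.app c a = P.numeral 1) ∧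
    ∀ a : A, (P.app c a = P.numeral 0 → some a ≠ P.numeral 1) ∧
             (P.app c a = P.numeral 1 → some a ≠ P.numeral 0)

section Aux

variable {A : Type*} (P : PCA A) (htot : ∀ a b : A, (P.app a b).isSome)

/-- Total application extracted from a total pca. -/
noncomputable def Ap (a b : A) : A := (P.app a b).get (htot a b)

lemma app_eq (a b : A) : P.app a b = some (Ap P htot a b) :=
  (Option.some_get (htot a b)).symm

lemma ap_some (x y : A) : P.ap (some x) (some y) = some (Ap P htot x y) := by
  simp [PCA.ap, pap, app_eq P htot]

lemma hk (a b : A) : Ap P htot (Ap P htot P.k a) b = a := by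
  have h := P.k_spec a b
  simp [pap, app_eq P htot] at h
  exact h

lemma hs (a b c : A) : Ap P htot (Ap P htot (Ap P htot P.s a) b) c
    = Ap P htot (Ap P htot a c) (Ap P htot b c) := by
  have h := P.s_spec a b c
  simp [pap, app_eq P htot] at h
  exact h

/-- The identity element. -/
noncomputable def i' : A := Ap P htot (Ap P htot P.s P.k) P.k

lemma hi (a : A) : Ap P htot (i' P htot) a = a := by
  rw [i', hs, hk]

lemma i_eq : P.i = some (i' P htot) := by
  rw [PCA.i, PCA.S', PCA.K', ap_some, ap_some]; rfl

/-- The false element. -/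
noncomputable def fls' : A := Ap P htot P.k (i' P htot)

lemma fls_eq : P.fls = some (fls' P htot) := by
  rw [PCA.fls, i_eq, PCA.K', ap_some]; rfl

lemma hfls (p q : A) : Ap P htot (Ap P htot (fls' P htot) p) q = q := by
  rw [fls', hk, hi]

/-- The pairing element. -/
noncomputable def pair' (x y : A) : A :=
  Ap P htot (Ap P htot P.s (Ap P htot (Ap P htot P.s (i' P htot)) (Ap P htot P.k x)))
    (Ap P htot P.k y)

lemma pair_eq (x y : A) : P.pair (some x) (some y) = some (pair' P htot x y) := by
  rw [PCA.pair, i_eq, PCA.S', PCA.K', ap_some, ap_some, ap_some, ap_some, ap_some, ap_some]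
  rfl

lemma hpair (x y z : A) : Ap P htot (pair' P htot x y) z = Ap P htot (Ap P htot z x) y := by
  rw [pair', hs, hk, hs, hi, hk]

/-- Total numerals. -/
noncomputable def num : ℕ → A
  | 0 => i' P htot
  | n + 1 => pair' P htot (fls' P htot) (num n)

lemma num_eq : ∀ n : ℕ, P.numeral n = some (num P htot n)
  | 0 => i_eq P htot
  | n + 1 => by rw [PCA.numeral, num, fls_eq, num_eq n, pair_eq]

/-- `λ* a. (((c a) k) 1̄) 0̄` as an element. -/
noncomputable def ff (c : A) : A :=
  Ap P htot
    (Ap P htot P.s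
      (Ap P htot (Ap P htot P.s (Ap P htot (Ap P htot P.s c) (Ap P htot P.k P.k)))
        (Ap P htot P.k (num P htot 1))))
    (Ap P htot P.k (num P htot 0))

lemma ff_spec (c a : A) :
    Ap P htot (ff P htot c) a
      = Ap P htot (Ap P htot (Ap P htot (Ap P htot c a) P.k) (num P htot 1)) (num P htot 0) := by
  rw [ff]
  simp only [hs, hk]

/-- `W = λ* x. f (x x)` for `f = ff c`. -/
noncomputable def ww (c : A) : A :=
  Ap P htot (Ap P htot P.s (Ap P htot P.k (ff P htot c)))
    (Ap P htot (Ap P htot P.s (i' P htot)) (i' P htot))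

lemma ww_spec (c x : A) :
    Ap P htot (ww P htot c) x = Ap P htot (ff P htot c) (Ap P htot x x) := by
  rw [ww]
  simp only [hs, hk, hi]

/-- The fixed point `d = W W`. -/
noncomputable def dd (c : A) : A := Ap P htot (ww P htot c) (ww P htot c)

lemma dd_spec (c : A) :
    dd P htot c
      = Ap P htot (Ap P htot (Ap P htot (Ap P htot c (dd P htot c)) P.k) (num P htot 1))
          (num P htot 0) := by
  conv_lhs => rw [dd, ww_spec]
  rw [ff_spec, dd]

end Aux

/-- In any total nontrivial pca, `0̄` and `1̄` are inseparable. -/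
theorem zero_one_inseparable_in_total_pca {A : Type*} [Nontrivial A] (P : PCA A)
    (htot : ∀ a b : A, (P.app a b).isSome) : ¬ P.Sep01 := by
  rintro ⟨c, -, hrange, hsep⟩
  set d := dd P htot c with hdd
  have hcd : P.app c d = some (Ap P htot c d) := app_eq P htot c d
  have hd := dd_spec P htot c
  rcases hrange d with h0 | h1
  · have hv : Ap P htot c d = num P htot 0 := by
      rw [hcd, num_eq P htot 0] at h0
      exact Option.some.inj h0
    have hd1 : d = num P htot 1 := by
      rw [← hdd] at hd
      rw [hd, hv]
      show Ap P htot (Ap P htot (Ap P htot (i' P htot) P.k) _) _ = _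
      rw [hi, hk]
    exact (hsep d).1 h0 (by rw [hd1, num_eq])
  · have hv : Ap P htot c d = num P htot 1 := by
      rw [hcd, num_eq P htot 1] at h1
      exact Option.some.inj h1
    have hd0 : d = num P htot 0 := by
      rw [← hdd] at hd
      rw [hd, hv]
      show Ap P htot (Ap P htot (Ap P htot (pair' P htot (fls' P htot) (num P htot 0)) P.k) _) _
        = _
      rw [hpair, hk, hfls]
    exact (hsep d).2 h1 (by rw [hd0, num_eq])
end
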